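/- Every orientation of the path on 10 vertices v₁, …, v₁₀ is (2,3)-cordial, except the alternating orientation with arc set {v₁→v₂, v₃→v₂, v₃→v₄, v₅→v₄, v₅→v₆, v₇→v₆, v₇→v₈, v₉→v₈, v₉→v₁₀} and its reversal. -/

import Mathlib

open Finset

variable {V : Type*} [Fintype V] [DecidableEq V]

/-- The label induced on an arc `a = (u, v)` by a vertex labeling `f : V → {0,1}`:
`g(u→v) = f(v) - f(u)`. -/
def arcLabel (f : V → Fin 2) (a : V × V) : ℤ := ((f a.2 : ℕ) : ℤ) - ((f a.1 : ℕ) : ℤ)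

/-- The number of arcs of `A` receiving induced label `i`. -/
def labelCount (A : Finset (V × V)) (f : V → Fin 2) (i : ℤ) : ℕ :=
  (A.filter fun a => arcLabel f a = i).card

/-- A vertex labeling `f : V → {0,1}` is friendly if the number of vertices labeled `0`
and the number labeled `1` differ by at most `1`. -/
def Friendly (f : V → Fin 2) : Prop :=
  |((univ.filter fun v => f v = 0).card : ℤ) - ((univ.filter fun v => f v = 1).card : ℤ)| ≤ 1

/-- A digraph (given by its arc set `A`) is (2,3)-cordial if there is a friendly vertex
labeling whose induced arc labeling `g` satisfies
`-1 ≤ |g⁻¹(i)| - |g⁻¹(j)| ≤ 1` for all `i, j ∈ {-1, 0, 1}`. -/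
def Cordial (A : Finset (V × V)) : Prop :=
  ∃ f : V → Fin 2, Friendly f ∧
    ∀ i ∈ ({-1, 0, 1} : Finset ℤ), ∀ j ∈ ({-1, 0, 1} : Finset ℤ),
      -1 ≤ (labelCount A f i : ℤ) - (labelCount A f j : ℤ) ∧
        (labelCount A f i : ℤ) - (labelCount A f j : ℤ) ≤ 1

/-- The orientation of the path `v₁ - v₂ - ⋯ - v₁₀` (vertices `0, …, 9 : Fin 10`)
determined by `o : Fin 9 → Bool`: the `i`-th edge `{vᵢ₊₁, vᵢ₊₂}` (i.e. between
vertices `i` and `i+1`) is oriented forwards if `o i = true` and backwards otherwise. -/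
def pathOrientation (o : Fin 9 → Bool) : Finset (Fin 10 × Fin 10) :=
  univ.image fun i : Fin 9 =>
    if o i then (i.castSucc, i.succ) else (i.succ, i.castSucc)

/-- The alternating orientation `v₁→v₂, v₃→v₂, v₃→v₄, v₅→v₄, v₅→v₆, v₇→v₆,
v₇→v₈, v₉→v₈, v₉→v₁₀`: even-indexed edges point forwards, odd-indexed ones backwards. -/
def altOrientation : Fin 9 → Bool := fun i => decide (i.val % 2 = 0)

/-- Witness labeling (encoded in binary) for each orientation, as a nested decision
tree on the orientation's bits; `0` for the two exceptional orientations. -/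
def witN (a b c d e f g h i : Bool) : ℕ := (if a then (if b then (if c then (if d then (if e then (if f then (if g then (if h then (if i then 468 else 234) else (if i then 468 else 372)) else (if h then (if i then 468 else 436) else (if i then 468 else 436))) else (if g then (if h then (if i then 372 else 468) else (if i then 410 else 468)) else (if h then (if i then 436 else 468) else (if i then 436 else 468)))) else (if f then (if g then (if h then (if i then 436 else 428) else (if i then 436 else 372)) else (if h then (if i then 364 else 436) else (if i then 372 else 436))) else (if g then (if h then (if i then 468 else 364) else (if i then 468 else 372)) else (if h then (if i then 468 else 428) else (if i then 468 else 428))))) else (if e then (if f then (if g then (if h then (if i then 348 else 468) else (if i then 364 else 468)) else (if h then (if i then 372 else 468) else (if i then 428 else 468))) else (if g then (if h then (if i then 436 else 372) else (if i then 436 else 218)) else (if h then (if i then 372 else 436) else (if i then 458 else 436)))) else (if f then (if g then (if h then (if i then 468 else 436) else (if i then 468 else 436)) else (if h then (if i then 468 else 428) else (if i then 468 else 372))) else (if g then (if h then (if i then 436 else 468) else (if i then 436 else 468)) else (if h then (if i then 372 else 468) else (if i then 428 else 468)))))) else (if d then (if e then (if f then (if g then (if h then (if i then 428 else 458) else (if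 i then 372 else 364)) else (if h then (if i then 436 else 428) else (if i then 436 else 428))) else (if g then (if h then (if i then 468 else 348) else (if i then 468 else 364)) else (if h then (if i then 468 else 466) else (if i then 468 else 348)))) else (if f then (if g then (if h then (if i then 434 else 428) else (if i then 372 else 428)) else (if h then (if i then 436 else 434) else (if i then 436 else 364))) else (if g then (if h then (if i then 428 else 364) else (if i then 372 else 348)) else (if h then (if i then 364 else 428) else (if i then 348 else 428))))) else (if e then (if f then (if g then (if h then (if i then 468 else 466) else (if i then 468 else 372)) else (if h then (if i then 468 else 436) else (if i then 468 else 436))) else (if g then (if h then (if i then 372 else 468) else (if i then 364 else 468)) else (if h then (if i then 436 else 468) else (if i then 436 else 468)))) else (if f then (if g then (if h then (if i then 436 else 434) else (if i then 436 else 372)) else (if h then (if i then 466 else 436) else (if i then 372 else 436))) else (if g then (if h then (if i then 468 else 466) else (if i then 468 else 372)) else (if h then (if i then 468 else 466) else (if i then 468 else 466))))))) else (if c then (if d then (if e then (if f then (if g then (if h then (if i then 422 else 468) else (if i then 370 else 468)) else (if h then (if i then 372 else 468) else (if i then 434 else 468))) else (if g then (if h then (if i then 436 else 372) else (if i then 436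 else 358)) else (if h then (if i then 372 else 436) else (if i then 466 else 436)))) else (if f then (if g then (if h then (if i then 468 else 436) else (if i then 468 else 436)) else (if h then (if i then 468 else 364) else (if i then 468 else 372))) else (if g then (if h then (if i then 436 else 468) else (if i then 436 else 468)) else (if h then (if i then 372 else 468) else (if i then 458 else 468))))) else (if e then (if f then (if g then (if h then (if i then 428 else 348) else (if i then 428 else 364)) else (if h then (if i then 348 else 372) else (if i then 364 else 428))) else (if g then (if h then (if i then 364 else 436) else (if i then 0 else 436)) else (if h then (if i then 428 else 372) else (if i then 428 else 466)))) else (if f then (if g then (if h then (if i then 348 else 468) else (if i then 434 else 468)) else (if h then (if i then 364 else 468) else (if i then 348 else 468))) else (if g then (if h then (if i then 428 else 436) else (if i then 428 else 436)) else (if h then (if i then 364 else 372) else (if i then 466 else 428)))))) else (if d then (if e then (if f then (if g then (if h then (if i then 468 else 428) else (if i then 468 else 372)) else (if h then (if i then 468 else 436) else (if i then 468 else 436))) else (if g then (if h then (if i then 372 else 468) else (if i then 428 else 468)) else (if h then (if i then 436 else 468) else (if i then 436 else 468)))) else (if f then (if g then (if h then (if i then 436 else 186) else (if i then 436 else 372))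 else (if h then (if i then 434 else 436) else (if i then 372 else 436))) else (if g then (if h then (if i then 468 else 428) else (if i then 468 else 372)) else (if h then (if i then 468 else 364) else (if i then 468 else 348))))) else (if e then (if f then (if g then (if h then (if i then 428 else 468) else (if i then 428 else 468)) else (if h then (if i then 372 else 468) else (if i then 364 else 468))) else (if g then (if h then (if i then 436 else 372) else (if i then 436 else 364)) else (if h then (if i then 372 else 436) else (if i then 428 else 436)))) else (if f then (if g then (if h then (if i then 468 else 436) else (if i then 468 else 436)) else (if h then (if i then 468 else 434) else (if i then 468 else 372))) else (if g then (if h then (if i then 436 else 468) else (if i then 436 else 468)) else (if h then (if i then 372 else 468) else (if i then 466 else 468)))))))) else (if b then (if c then (if d then (if e then (if f then (if g then (if h then (if i then 468 else 466) else (if i then 468 else 372)) else (if h then (if i then 468 else 436) else (if i then 468 else 436))) else (if g then (if h then (if i then 372 else 468) else (if i then 434 else 468)) else (if h then (if i then 436 else 468) else (if i then 436 else 468)))) else (if f then (if g then (if h then (if i then 436 else 428) else (if i then 436 else 372)) else (if h then (if i then 364 else 436) else (if i then 372 else 436))) else (if g then (if h then (if i then 468 else 364) else (if i then 468 else 372))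 else (if h then (if i then 468 else 428) else (if i then 468 else 428))))) else (if e then (if f then (if g then (if h then (if i then 348 else 468) else (if i then 364 else 468)) else (if h then (if i then 372 else 468) else (if i then 428 else 468))) else (if g then (if h then (if i then 436 else 372) else (if i then 436 else 434)) else (if h then (if i then 372 else 436) else (if i then 186 else 436)))) else (if f then (if g then (if h then (if i then 468 else 436) else (if i then 468 else 436)) else (if h then (if i then 468 else 428) else (if i then 468 else 372))) else (if g then (if h then (if i then 436 else 468) else (if i then 436 else 468)) else (if h then (if i then 372 else 468) else (if i then 428 else 468)))))) else (if d then (if e then (if f then (if g then (if h then (if i then 428 else 466) else (if i then 372 else 364)) else (if h then (if i then 436 else 428) else (if i then 436 else 428))) else (if g then (if h then (if i then 468 else 348) else (if i then 468 else 364)) else (if h then (if i then 468 else 434) else (if i then 468 else 348)))) else (if f then (if g then (if h then (if i then 466 else 428) else (if i then 372 else 428)) else (if h then (if i then 436 else 0) else (if i then 436 else 364))) else (if g then (if h then (if i then 428 else 364) else (if i then 372 else 348)) else (if h then (if i then 364 else 428) else (if i then 348 else 428))))) else (if e then (if f then (if g then (if h then (if i then 468 else 458) else (if i then 468 else 372))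 else (if h then (if i then 468 else 436) else (if i then 468 else 436))) else (if g then (if h then (if i then 372 else 468) else (if i then 364 else 468)) else (if h then (if i then 436 else 468) else (if i then 436 else 468)))) else (if f then (if g then (if h then (if i then 436 else 466) else (if i then 436 else 372)) else (if h then (if i then 358 else 436) else (if i then 372 else 436))) else (if g then (if h then (if i then 468 else 434) else (if i then 468 else 372)) else (if h then (if i then 468 else 370) else (if i then 468 else 422))))))) else (if c then (if d then (if e then (if f then (if g then (if h then (if i then 466 else 468) else (if i then 466 else 468)) else (if h then (if i then 372 else 468) else (if i then 466 else 468))) else (if g then (if h then (if i then 436 else 372) else (if i then 436 else 466)) else (if h then (if i then 372 else 436) else (if i then 434 else 436)))) else (if f then (if g then (if h then (if i then 468 else 436) else (if i then 468 else 436)) else (if h then (if i then 468 else 364) else (if i then 468 else 372))) else (if g then (if h then (if i then 436 else 468) else (if i then 436 else 468)) else (if h then (if i then 372 else 468) else (if i then 466 else 468))))) else (if e then (if f then (if g then (if h then (if i then 428 else 348) else (if i then 428 else 364)) else (if h then (if i then 348 else 372) else (if i then 364 else 428))) else (if g then (if h then (if i then 364 else 436) else (if i then 434 else 436)) else (if h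 then (if i then 428 else 372) else (if i then 428 else 434)))) else (if f then (if g then (if h then (if i then 348 else 468) else (if i then 466 else 468)) else (if h then (if i then 364 else 468) else (if i then 348 else 468))) else (if g then (if h then (if i then 428 else 436) else (if i then 428 else 436)) else (if h then (if i then 364 else 372) else (if i then 458 else 428)))))) else (if d then (if e then (if f then (if g then (if h then (if i then 468 else 428) else (if i then 468 else 372)) else (if h then (if i then 468 else 436) else (if i then 468 else 436))) else (if g then (if h then (if i then 372 else 468) else (if i then 428 else 468)) else (if h then (if i then 436 else 468) else (if i then 436 else 468)))) else (if f then (if g then (if h then (if i then 436 else 458) else (if i then 436 else 372)) else (if h then (if i then 218 else 436) else (if i then 372 else 436))) else (if g then (if h then (if i then 468 else 428) else (if i then 468 else 372)) else (if h then (if i then 468 else 364) else (if i then 468 else 348))))) else (if e then (if f then (if g then (if h then (if i then 428 else 468) else (if i then 428 else 468)) else (if h then (if i then 372 else 468) else (if i then 364 else 468))) else (if g then (if h then (if i then 436 else 372) else (if i then 436 else 364)) else (if h then (if i then 372 else 436) else (if i then 428 else 436)))) else (if f then (if g then (if h then (if i then 468 else 436) else (if i then 468 else 436)) else (if h then (if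 i then 468 else 410) else (if i then 468 else 372))) else (if g then (if h then (if i then 436 else 468) else (if i then 436 else 468)) else (if h then (if i then 372 else 468) else (if i then 234 else 468)))))))))

/-- Decode a binary-encoded labeling. -/
def fB (n : ℕ) : Fin 10 → Fin 2 := fun v => if n.testBit v.val then 1 else 0

/-- The witness labeling for an orientation. -/
def wit (o : Fin 9 → Bool) : Fin 10 → Fin 2 :=
  fB (witN (o 0) (o 1) (o 2) (o 3) (o 4) (o 5) (o 6) (o 7) (o 8))

instance friendlyDec {V : Type*} [Fintype V] [DecidableEq V] (f : V → Fin 2) :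
    Decidable (Friendly f) := by
  unfold Friendly; infer_instance

instance cordialDec {V : Type*} [Fintype V] [DecidableEq V] (A : Finset (V × V)) :
    Decidable (Cordial A) := by
  unfold Cordial Friendly; infer_instance

set_option maxRecDepth 4000 in
set_option maxHeartbeats 10000000 in
lemma negAltAux : ∀ a b c d e f g h i j : Fin 2,
    ¬ (Friendly ![a,b,c,d,e,f,g,h,i,j] ∧
      ∀ x ∈ ({-1, 0, 1} : Finset ℤ), ∀ y ∈ ({-1, 0, 1} : Finset ℤ),
        -1 ≤ (labelCount (pathOrientation altOrientation) ![a,b,c,d,e,f,g,h,i,j] x : ℤ) -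
            (labelCount (pathOrientation altOrientation) ![a,b,c,d,e,f,g,h,i,j] y : ℤ) ∧
          (labelCount (pathOrientation altOrientation) ![a,b,c,d,e,f,g,h,i,j] x : ℤ) -
            (labelCount (pathOrientation altOrientation) ![a,b,c,d,e,f,g,h,i,j] y : ℤ) ≤ 1) := by
  decide +kernel

set_option maxRecDepth 4000 in
set_option maxHeartbeats 10000000 in
lemma negRevAux : ∀ a b c d e f g h i j : Fin 2,
    ¬ (Friendly ![a,b,c,d,e,f,g,h,i,j] ∧
      ∀ x ∈ ({-1, 0, 1} : Finset ℤ), ∀ y ∈ ({-1, 0, 1} : Finset ℤ),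
        -1 ≤ (labelCount (pathOrientation fun i => !(altOrientation i)) ![a,b,c,d,e,f,g,h,i,j] x : ℤ) -
            (labelCount (pathOrientation fun i => !(altOrientation i)) ![a,b,c,d,e,f,g,h,i,j] y : ℤ) ∧
          (labelCount (pathOrientation fun i => !(altOrientation i)) ![a,b,c,d,e,f,g,h,i,j] x : ℤ) -
            (labelCount (pathOrientation fun i => !(altOrientation i)) ![a,b,c,d,e,f,g,h,i,j] y : ℤ) ≤ 1) := by
  decide +kernel

lemma negAlt : ¬ Cordial (pathOrientation altOrientation) := by
  rintro ⟨f, hf, hc⟩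
  have hfe : f = ![f 0, f 1, f 2, f 3, f 4, f 5, f 6, f 7, f 8, f 9] := by
    funext v; fin_cases v <;> rfl
  refine negAltAux (f 0) (f 1) (f 2) (f 3) (f 4) (f 5) (f 6) (f 7) (f 8) (f 9) ?_
  rw [← hfe]; exact ⟨hf, hc⟩

lemma negRev : ¬ Cordial (pathOrientation fun i => !(altOrientation i)) := by
  rintro ⟨f, hf, hc⟩
  have hfe : f = ![f 0, f 1, f 2, f 3, f 4, f 5, f 6, f 7, f 8, f 9] := by
    funext v; fin_cases v <;> rfl
  refine negRevAux (f 0) (f 1) (f 2) (f 3) (f 4) (f 5) (f 6) (f 7) (f 8) (f 9) ?_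
  rw [← hfe]; exact ⟨hf, hc⟩

set_option maxRecDepth 4000 in
set_option maxHeartbeats 10000000 in
lemma main_wit_aux : ∀ a b c d e f g h i : Bool,
    (![a,b,c,d,e,f,g,h,i] : Fin 9 → Bool) ≠ altOrientation →
    ((![a,b,c,d,e,f,g,h,i] : Fin 9 → Bool) ≠ fun x => !(altOrientation x)) →
    Friendly (wit ![a,b,c,d,e,f,g,h,i]) ∧
      labelCount (pathOrientation ![a,b,c,d,e,f,g,h,i]) (wit ![a,b,c,d,e,f,g,h,i]) (-1) = 3 ∧
      labelCount (pathOrientation ![a,b,c,d,e,f,g,h,i]) (wit ![a,b,c,d,e,f,g,h,i]) 0 = 3 ∧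
      labelCount (pathOrientation ![a,b,c,d,e,f,g,h,i]) (wit ![a,b,c,d,e,f,g,h,i]) 1 = 3 := by
  decide +kernel

lemma main_wit : ∀ o : Fin 9 → Bool, o ≠ altOrientation →
    (o ≠ fun i => !(altOrientation i)) →
    Friendly (wit o) ∧ labelCount (pathOrientation o) (wit o) (-1) = 3 ∧
      labelCount (pathOrientation o) (wit o) 0 = 3 ∧
      labelCount (pathOrientation o) (wit o) 1 = 3 := by
  intro o h1 h2
  have hoe : o = ![o 0, o 1, o 2, o 3, o 4, o 5, o 6, o 7, o 8] := by
    funext v; fin_cases v <;> rfl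
  rw [hoe] at h1 h2 ⊢
  exact main_wit_aux (o 0) (o 1) (o 2) (o 3) (o 4) (o 5) (o 6) (o 7) (o 8) h1 h2

/-- An orientation of the path on 10 vertices is (2,3)-cordial if and only if it is
neither the alternating orientation nor its reversal. -/
theorem path10_cordial_iff (o : Fin 9 → Bool) :
    Cordial (pathOrientation o) ↔
      o ≠ altOrientation ∧ o ≠ fun i => !(altOrientation i) := by
  constructor
  · intro h
    constructor <;> rintro rfl
    · exact negAlt h
    · exact negRev h
  · rintro ⟨h1, h2⟩
    obtain ⟨hf, c1, c2, c3⟩ := main_wit o h1 h2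
    refine ⟨wit o, hf, ?_⟩
    intro i hi j hj
    fin_cases hi <;> fin_cases hj <;> simp [c1, c2, c3]
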